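/- There exists a constant C > 0 such that for every integer t ≥ 2 and every real x, |g_t(x) − (x − t/2)²/(2H_t)| ≤ C·t²·log t; that is, the vertical distance between the grid parabola P_t and the reference parabola y = (x − t/2)²/(2H_t) is O(t² log t). -/

import Mathlib

/-- Horizontal length of the edge of slope a/b (in lowest terms, 1 ≤ b ≤ t)
of the grid parabola P_t: `b·⌊t/b⌋`. -/
def edgeLen (t b : ℕ) : ℕ := b * (t / b)

/-- The x-coordinate of the left endpoint of the edge of slope a/b of the grid
parabola P_t (normalized so that the edge of slope 0 is [0,t]): it is t plus the
total horizontal length of all edges of slopes strictly between 0 and a/b. -/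
noncomputable def leftEnd (t a b : ℕ) : ℝ :=
  (t : ℝ) + ∑ q ∈ (Finset.Icc 1 t ×ˢ Finset.Icc 1 (a * t)).filter
      (fun q => Nat.gcd q.2 q.1 = 1 ∧ q.2 * b < a * q.1),
    (edgeLen t q.1 : ℝ)

/-- The right half of the grid parabola: for x ≥ t, sum over all primitive slopes
a/b (a ≥ 1, 1 ≤ b ≤ t) of the vertical rise accumulated by the edge of slope a/b
up to abscissa x. -/
noncomputable def gR (t : ℕ) (x : ℝ) : ℝ :=
  ∑' p : ℕ × ℕ,
    if 1 ≤ p.1 ∧ 1 ≤ p.2 ∧ p.2 ≤ t ∧ Nat.gcd p.1 p.2 = 1 then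
      ((p.1 : ℝ) / (p.2 : ℝ)) *
        min (max (x - leftEnd t p.1 p.2) 0) ((edgeLen t p.2 : ℕ) : ℝ)
    else 0

/-- The convex piecewise-linear function `g_t` whose graph is the grid parabola
P_t : for each rational slope a/b in lowest terms with 1 ≤ b ≤ t there is exactly
one edge of slope a/b, of horizontal length b·⌊t/b⌋, the edges occurring in order
of increasing slope; normalized so that g_t = 0 exactly on [0,t].  The left half
is obtained from the right half by the symmetry x ↦ t - x. -/
noncomputable def gridParabola (t : ℕ) (x : ℝ) : ℝ :=
  if x ≤ (t : ℝ) / 2 then gR t ((t : ℝ) - x) else gR t x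

/-- The horizontal period `H_t = Σ ⌊t/x⌋·x` over pairs `1 ≤ y ≤ x ≤ t` with `gcd(x,y) = 1`. -/
def Hper (t : ℕ) : ℕ :=
  ∑ p ∈ (Finset.Icc 1 t ×ˢ Finset.Icc 1 t).filter
      (fun p => p.2 ≤ p.1 ∧ Nat.gcd p.1 p.2 = 1),
    (t / p.1) * p.1

open Finset

namespace GP
local notation "μ" => ArithmeticFunction.moebius

def cond (t : ℕ) (p : ℕ × ℕ) : Prop :=
  1 ≤ p.1 ∧ 1 ≤ p.2 ∧ p.2 ≤ t ∧ Nat.gcd p.1 p.2 = 1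

instance (t : ℕ) : DecidablePred (cond t) := fun p => by unfold cond; infer_instance

noncomputable def slopeR (p : ℕ × ℕ) : ℝ := (p.1 : ℝ) / (p.2 : ℝ)

noncomputable def clamp (t : ℕ) (x : ℝ) (p : ℕ × ℕ) : ℝ :=
  min (max (x - leftEnd t p.1 p.2) 0) ((edgeLen t p.2 : ℝ))

def PF (t A : ℕ) : Finset (ℕ × ℕ) := (Icc 1 A ×ˢ Icc 1 t).filter (cond t)

/-- the index set in the definition of `leftEnd`. -/
def LS (t a b : ℕ) : Finset (ℕ × ℕ) :=
  (Finset.Icc 1 t ×ˢ Finset.Icc 1 (a * t)).filter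
      (fun q => Nat.gcd q.2 q.1 = 1 ∧ q.2 * b < a * q.1)

lemma leftEnd_eq (t a b : ℕ) :
    leftEnd t a b = (t : ℝ) + ∑ q ∈ LS t a b, (edgeLen t q.1 : ℝ) := rfl

lemma mem_LS {t a b : ℕ} (hb : 1 ≤ b) {q : ℕ × ℕ} :
    q ∈ LS t a b ↔ 1 ≤ q.1 ∧ q.1 ≤ t ∧ 1 ≤ q.2 ∧ Nat.gcd q.2 q.1 = 1 ∧ q.2 * b < a * q.1 := by
  simp only [LS, Finset.mem_filter, Finset.mem_product, Finset.mem_Icc]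
  constructor
  · rintro ⟨⟨⟨h1, h2⟩, h3, _⟩, h5, h6⟩; exact ⟨h1, h2, h3, h5, h6⟩
  · rintro ⟨h1, h2, h3, h5, h6⟩
    refine ⟨⟨⟨h1, h2⟩, h3, ?_⟩, h5, h6⟩
    calc q.2 ≤ q.2 * b := Nat.le_mul_of_pos_right _ hb
    _ ≤ a * q.1 := h6.le
    _ ≤ a * t := Nat.mul_le_mul_left _ h2

lemma LS_subset {t a b c d : ℕ} (hb : 1 ≤ b) (hd : 1 ≤ d) (h : a * d < c * b) :
    LS t a b ⊆ LS t c d := by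
  intro q hq
  rw [mem_LS hb] at hq
  rw [mem_LS hd]
  obtain ⟨h1, h2, h3, h5, h6⟩ := hq
  refine ⟨h1, h2, h3, h5, ?_⟩
  have k1 : q.2 * b * d < a * q.1 * d := (Nat.mul_lt_mul_right hd).mpr h6
  have k2 : a * d * q.1 < c * b * q.1 := (Nat.mul_lt_mul_right h1).mpr h
  have : q.2 * d * b < c * q.1 * b := by
    calc q.2 * d * b = q.2 * b * d := by ring
    _ < a * q.1 * d := k1
    _ = a * d * q.1 := by ring
    _ < c * b * q.1 := k2
    _ = c * q.1 * b := by ring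
  exact Nat.lt_of_mul_lt_mul_right this

lemma swap_mem_LS {t a b c d : ℕ} (h1 : cond t (a, b)) (h2 : cond t (c, d))
    (h : a * d < c * b) : (b, a) ∈ LS t c d := by
  obtain ⟨ha, hb, hbt, hg⟩ := h1
  obtain ⟨hc, hd, hdt, _⟩ := h2
  rw [mem_LS hd]
  exact ⟨hb, hbt, ha, hg, h⟩

lemma swap_not_mem_LS {t a b : ℕ} : (b, a) ∉ LS t a b := by
  intro hmem
  simp only [LS, Finset.mem_filter] at hmem
  exact absurd hmem.2.2 (by simp [Nat.mul_comm])

lemma edgeLen_nonneg (t b : ℕ) : (0:ℝ) ≤ (edgeLen t b : ℝ) := by positivity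

lemma leftEnd_add_len_le {t a b c d : ℕ} (h1 : cond t (a, b)) (h2 : cond t (c, d))
    (h : a * d < c * b) : leftEnd t a b + edgeLen t b ≤ leftEnd t c d := by
  rw [leftEnd_eq, leftEnd_eq]
  have hsub : insert (b, a) (LS t a b) ⊆ LS t c d :=
    Finset.insert_subset (swap_mem_LS h1 h2 h) (LS_subset h1.2.1 h2.2.1 h)
  have hsum : ∑ q ∈ insert (b, a) (LS t a b), (edgeLen t q.1 : ℝ)
      ≤ ∑ q ∈ LS t c d, (edgeLen t q.1 : ℝ) :=
    Finset.sum_le_sum_of_subset_of_nonneg hsub (fun q _ _ => edgeLen_nonneg t q.1)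
  rw [Finset.sum_insert swap_not_mem_LS] at hsum
  linarith

lemma leftEnd_ge_t {t a b : ℕ} : (t : ℝ) ≤ leftEnd t a b := by
  rw [leftEnd_eq]
  have : (0:ℝ) ≤ ∑ q ∈ LS t a b, (edgeLen t q.1 : ℝ) :=
    Finset.sum_nonneg (fun q _ => edgeLen_nonneg t q.1)
  linarith


lemma slopeR_lt_iff {p q : ℕ × ℕ} (hp : 1 ≤ p.2) (hq : 1 ≤ q.2) :
    slopeR p < slopeR q ↔ p.1 * q.2 < q.1 * p.2 := by
  unfold slopeR
  rw [div_lt_div_iff₀ (by exact_mod_cast hp) (by exact_mod_cast hq)]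
  exact_mod_cast Iff.rfl

lemma slopeR_le_iff {p q : ℕ × ℕ} (hp : 1 ≤ p.2) (hq : 1 ≤ q.2) :
    slopeR p ≤ slopeR q ↔ p.1 * q.2 ≤ q.1 * p.2 := by
  unfold slopeR
  rw [div_le_div_iff₀ (by exact_mod_cast hp) (by exact_mod_cast hq)]
  exact_mod_cast Iff.rfl

lemma slopeR_nonneg (p : ℕ × ℕ) : 0 ≤ slopeR p := by unfold slopeR; positivity

lemma eq_of_cross_eq {t a b c d : ℕ} (h1 : cond t (a, b)) (h2 : cond t (c, d))
    (h : a * d = c * b) : a = c ∧ b = d := by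
  have hab : Nat.Coprime a b := h1.2.2.2
  have hcd : Nat.Coprime c d := h2.2.2.2
  have hac : a ∣ c := hab.dvd_of_dvd_mul_right ⟨d, h.symm⟩
  have hca : c ∣ a := hcd.dvd_of_dvd_mul_right ⟨b, by rw [← h]⟩
  have hA : a = c := Nat.dvd_antisymm hac hca
  subst hA
  have ha : 1 ≤ a := h1.1
  have : d = b := Nat.eq_of_mul_eq_mul_left (by omega) h
  exact ⟨rfl, this.symm⟩

lemma leftEnd_ge_fst {t a b : ℕ} (h : cond t (a, b)) : (a : ℝ) ≤ leftEnd t a b := by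
  obtain ⟨ha, hb, hbt, hg⟩ := h
  simp only at ha hb hbt hg
  have ht1 : 1 ≤ t := le_trans hb hbt
  -- the image finset
  have hsub : (Finset.Icc 1 ((a - 1) / b)).image (fun a' => ((1:ℕ), a')) ⊆ LS t a b := by
    intro q hq
    simp only [Finset.mem_image, Finset.mem_Icc] at hq
    obtain ⟨a', ⟨h1, h2⟩, rfl⟩ := hq
    rw [mem_LS hb]
    refine ⟨le_refl 1, ht1, h1, Nat.gcd_one_right _, ?_⟩
    show a' * b < a * 1
    have : a' * b ≤ a - 1 := (Nat.le_div_iff_mul_le hb).mp h2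
    omega
  have hsum : ∑ q ∈ (Finset.Icc 1 ((a - 1) / b)).image (fun a' => ((1:ℕ), a')), (edgeLen t q.1 : ℝ)
      ≤ ∑ q ∈ LS t a b, (edgeLen t q.1 : ℝ) :=
    Finset.sum_le_sum_of_subset_of_nonneg hsub (fun q _ _ => edgeLen_nonneg t q.1)
  have himg : ∑ q ∈ (Finset.Icc 1 ((a - 1) / b)).image (fun a' => ((1:ℕ), a')), (edgeLen t q.1 : ℝ)
      = (((a - 1) / b : ℕ) : ℝ) * t := by
    rw [Finset.sum_image (by intro x _ y _ hxy; simpa using hxy)]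
    simp [edgeLen, Nat.card_Icc]
  have hKa : a ≤ b * ((a - 1) / b + 1) := by
    have h4 : (a-1)/b * b + (a - 1) % b = a - 1 := Nat.div_add_mod' (a-1) b
    have h5 : (a - 1) % b < b := Nat.mod_lt _ hb
    have h6 : b * ((a-1)/b + 1) = (a-1)/b * b + b := by ring
    omega
  have hbt' : b * ((a - 1) / b + 1) ≤ t * ((a - 1) / b + 1) := Nat.mul_le_mul_right _ hbt
  have : (a : ℝ) ≤ (t : ℝ) + (((a - 1) / b : ℕ) : ℝ) * t := by
    have : (a : ℝ) ≤ ((t * ((a - 1) / b + 1) : ℕ) : ℝ) := by exact_mod_cast le_trans hKa hbt'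
    push_cast at this
    linarith
  rw [leftEnd_eq]
  linarith [hsum, himg]

lemma exists_succ {t a b : ℕ} (h : cond t (a, b)) :
    ∃ c d : ℕ, cond t (c, d) ∧ a * d < c * b ∧
      leftEnd t c d = leftEnd t a b + edgeLen t b := by
  obtain ⟨ha, hb, hbt, hg⟩ := h
  have ht1 : 1 ≤ t := le_trans hb hbt
  set T : Finset (ℕ × ℕ) := (Icc 1 ((a+1)*t) ×ˢ Icc 1 t).filter
      (fun p => cond t p ∧ a * p.2 < p.1 * b) with hT
  have hmemT : ∀ p, p ∈ T ↔ (p.1 ≤ (a+1)*t ∧ cond t p ∧ a * p.2 < p.1 * b) := by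
    intro p
    simp only [hT, Finset.mem_filter, Finset.mem_product, Finset.mem_Icc]
    constructor
    · rintro ⟨⟨⟨_, h2⟩, _⟩, hc, hlt⟩; exact ⟨h2, hc, hlt⟩
    · rintro ⟨h2, hc, hlt⟩; exact ⟨⟨⟨hc.1, h2⟩, hc.2.1, hc.2.2.1⟩, hc, hlt⟩
  have hne : T.Nonempty := by
    refine ⟨(a+1, 1), (hmemT _).mpr ⟨?_, ⟨by omega, by omega, ht1, Nat.gcd_one_right _⟩, ?_⟩⟩
    · exact Nat.le_mul_of_pos_right _ ht1
    · simp only [mul_one]; calc a < a + 1 := by omega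
        _ ≤ (a+1) * b := Nat.le_mul_of_pos_right _ hb
  obtain ⟨τ, hτT, hmin⟩ := T.exists_min_image slopeR hne
  obtain ⟨hτ1, hτc, hτlt⟩ := (hmemT τ).mp hτT
  refine ⟨τ.1, τ.2, hτc, hτlt, ?_⟩
  have hcab : cond t (a, b) := ⟨ha, hb, hbt, hg⟩
  have hkey : LS t τ.1 τ.2 = insert (b, a) (LS t a b) := by
    apply Finset.Subset.antisymm
    · intro q hq
      rw [mem_LS hτc.2.1] at hq
      obtain ⟨hq1, hq2, hq3, hq5, hq6⟩ := hq
      have hpc : cond t (q.2, q.1) := ⟨hq3, hq1, hq2, hq5⟩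
      rcases Nat.lt_trichotomy (q.2 * b) (a * q.1) with hlt | heq | hgt
      · exact Finset.mem_insert_of_mem ((mem_LS hb).mpr ⟨hq1, hq2, hq3, hq5, hlt⟩)
      · have := eq_of_cross_eq hpc hcab heq
        rw [Finset.mem_insert]
        left
        have : q = (b, a) := Prod.ext (by simp [this.2]) (by simp [this.1])
        exact this
      · exfalso
        -- (q.2, q.1) would be a member of T with smaller slope than τ
        have hτa1 : τ.1 * 1 ≤ (a + 1) * τ.2 := by
          have hm := hmin (a+1, 1) ((hmemT _).mpr ⟨Nat.le_mul_of_pos_right _ ht1,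
            ⟨by omega, by omega, ht1, Nat.gcd_one_right _⟩, by
              simp only [mul_one]; calc a < a + 1 := by omega
                _ ≤ (a+1) * b := Nat.le_mul_of_pos_right _ hb⟩)
          rw [slopeR_le_iff hτc.2.1 (by norm_num)] at hm
          simpa using hm
        have hq2A : q.2 ≤ (a+1)*t := by
          -- q.2 * τ.2 < τ.1 * q.1 ≤ (a+1) * τ.2 * q.1  ⇒  q.2 < (a+1) * q.1
          have k1 : q.2 * τ.2 < τ.1 * q.1 := hq6
          have k2 : τ.1 * q.1 ≤ (a+1) * τ.2 * q.1 := Nat.mul_le_mul_right _ (by omega)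
          have k3 : q.2 * τ.2 < (a+1) * q.1 * τ.2 := by
            calc q.2 * τ.2 < (a+1) * τ.2 * q.1 := lt_of_lt_of_le k1 k2
            _ = (a+1) * q.1 * τ.2 := by ring
          have := Nat.lt_of_mul_lt_mul_right k3
          calc q.2 ≤ (a+1) * q.1 := this.le
            _ ≤ (a+1) * t := Nat.mul_le_mul_left _ hq2
        have hqT : (q.2, q.1) ∈ T := (hmemT _).mpr ⟨hq2A, hpc, by simpa [Nat.mul_comm] using hgt⟩
        have := hmin _ hqT
        rw [slopeR_le_iff hτc.2.1 hq1] at this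
        simp only at this
        -- this : τ.1 * q.1 ≤ q.2 * τ.2, contradicting hq6 : q.2 * τ.2 < τ.1 * q.1
        omega
    · exact Finset.insert_subset (swap_mem_LS hcab hτc hτlt)
        (LS_subset hb hτc.2.1 hτlt)
  rw [leftEnd_eq, leftEnd_eq, hkey, Finset.sum_insert swap_not_mem_LS]
  push_cast
  ring

noncomputable def Fd (t : ℕ) (s : ℝ) : ℝ :=
  s * t + ∑' p : ℕ × ℕ, if cond t p then max (s - slopeR p) 0 * (edgeLen t p.2 : ℝ) else 0

lemma clamp_nonneg (t : ℕ) (x : ℝ) (p : ℕ × ℕ) : 0 ≤ clamp t x p :=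
  le_min (le_max_right _ 0) (edgeLen_nonneg t p.2)

lemma clamp_le_len (t : ℕ) (x : ℝ) (p : ℕ × ℕ) : clamp t x p ≤ (edgeLen t p.2 : ℝ) :=
  min_le_right _ _

lemma clamp_eq_zero {t : ℕ} {x : ℝ} {p : ℕ × ℕ} (h : x ≤ leftEnd t p.1 p.2) :
    clamp t x p = 0 := by
  unfold clamp
  rw [max_eq_right (by linarith), min_eq_left (edgeLen_nonneg t p.2)]

lemma clamp_eq_len {t : ℕ} {x : ℝ} {p : ℕ × ℕ}
    (h : leftEnd t p.1 p.2 + (edgeLen t p.2 : ℝ) ≤ x) : clamp t x p = (edgeLen t p.2 : ℝ) := by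
  unfold clamp
  rw [max_eq_left (by linarith [edgeLen_nonneg t p.2]), min_eq_right (by linarith)]

lemma clamp_eq_mid {t : ℕ} {x : ℝ} {p : ℕ × ℕ} (h1 : leftEnd t p.1 p.2 ≤ x)
    (h2 : x ≤ leftEnd t p.1 p.2 + (edgeLen t p.2 : ℝ)) :
    clamp t x p = x - leftEnd t p.1 p.2 := by
  unfold clamp
  rw [max_eq_left (by linarith), min_eq_left (by linarith)]

lemma mem_PF {t A : ℕ} {p : ℕ × ℕ} : p ∈ PF t A ↔ p.1 ≤ A ∧ cond t p := by
  simp only [PF, Finset.mem_filter, Finset.mem_product, Finset.mem_Icc]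
  constructor
  · rintro ⟨⟨⟨_, h2⟩, _⟩, hc⟩; exact ⟨h2, hc⟩
  · rintro ⟨h2, hc⟩; exact ⟨⟨⟨hc.1, h2⟩, hc.2.1, hc.2.2.1⟩, hc⟩

lemma gR_eq_sum {t A : ℕ} {x : ℝ} (hA : x ≤ A) :
    gR t x = ∑ p ∈ PF t A, slopeR p * clamp t x p := by
  rw [gR, tsum_eq_sum (s := PF t A) ?_]
  · exact Finset.sum_congr rfl (fun p hp => by
      have hc : cond t p := (mem_PF.mp hp).2
      rw [if_pos ⟨hc.1, hc.2.1, hc.2.2.1, hc.2.2.2⟩]; rfl)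
  · intro p hp
    by_cases hc : 1 ≤ p.1 ∧ 1 ≤ p.2 ∧ p.2 ≤ t ∧ Nat.gcd p.1 p.2 = 1
    · rw [if_pos hc]
      have hcond : cond t p := hc
      have hp1 : A < p.1 := by
        by_contra hle
        exact hp (mem_PF.mpr ⟨le_of_not_gt hle, hcond⟩)
      have hx : x ≤ leftEnd t p.1 p.2 := by
        have h2 := leftEnd_ge_fst (t := t) (a := p.1) (b := p.2) hcond
        have : (A : ℝ) < (p.1 : ℝ) := by exact_mod_cast hp1
        linarith
      have hz := clamp_eq_zero (t := t) (x := x) (p := p) hx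
      unfold clamp at hz
      rw [hz, mul_zero]
    · rw [if_neg hc]

lemma Fd_eq_sum {t A : ℕ} {s : ℝ} (ht : 1 ≤ t) (hA : s * t ≤ A) :
    Fd t s = s * t + ∑ p ∈ PF t A, max (s - slopeR p) 0 * (edgeLen t p.2 : ℝ) := by
  rw [Fd]
  congr 1
  rw [tsum_eq_sum (s := PF t A) ?_]
  · exact Finset.sum_congr rfl (fun p hp => by rw [if_pos (mem_PF.mp hp).2])
  · intro p hp
    by_cases hc : cond t p
    · rw [if_pos hc]
      have hp1 : A < p.1 := by
        by_contra hle
        exact hp (mem_PF.mpr ⟨le_of_not_gt hle, hc⟩)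
      have ht0 : (0:ℝ) < t := by exact_mod_cast lt_of_lt_of_le one_pos ht
      have hp2 : (0:ℝ) < (p.2 : ℝ) := by exact_mod_cast hc.2.1
      have hslope : s < slopeR p := by
        have h1 : s * t < (p.1 : ℝ) := by
          have : (A:ℝ) < (p.1:ℝ) := by exact_mod_cast hp1
          linarith
        have h2 : (p.1 : ℝ) / (t:ℝ) ≤ slopeR p := by
          unfold slopeR
          apply div_le_div_of_nonneg_left (by positivity) hp2
          exact_mod_cast hc.2.2.1
        have : s < (p.1 : ℝ) / (t : ℝ) := by rw [lt_div_iff₀ ht0]; linarith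
        linarith
      rw [max_eq_right (by linarith), zero_mul]
    · rw [if_neg hc]

lemma leftEnd_one_t {t : ℕ} (ht : 1 ≤ t) : leftEnd t 1 t = t := by
  rw [leftEnd_eq]
  have : LS t 1 t = ∅ := by
    apply Finset.eq_empty_of_forall_notMem
    intro q hq
    rw [mem_LS ht] at hq
    obtain ⟨h1, h2, h3, _, h5⟩ := hq
    -- q.2 * t < 1 * q.1 ≤ t
    have : q.2 * t < t := by calc q.2 * t < 1 * q.1 := h5
                                 _ = q.1 := by ring
                                 _ ≤ t := h2
    nlinarith
  rw [this, Finset.sum_empty, add_zero]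

lemma exists_sigma {t : ℕ} (ht : 2 ≤ t) {x : ℝ} (hxt : (t:ℝ) ≤ x) :
    ∃ σ : ℕ × ℕ, cond t σ ∧ leftEnd t σ.1 σ.2 ≤ x ∧
      x ≤ leftEnd t σ.1 σ.2 + (edgeLen t σ.2 : ℝ) := by
  classical
  set D : Finset (ℕ × ℕ) := (PF t ⌈x⌉₊).filter (fun p => leftEnd t p.1 p.2 ≤ x) with hD
  have hmemD : ∀ p, p ∈ D ↔ (p.1 ≤ ⌈x⌉₊ ∧ cond t p ∧ leftEnd t p.1 p.2 ≤ x) := by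
    intro p
    simp only [hD, Finset.mem_filter, mem_PF]
    tauto
  have hxceil : x ≤ (⌈x⌉₊ : ℝ) := Nat.le_ceil x
  have hmemD' : ∀ p : ℕ × ℕ, cond t p → leftEnd t p.1 p.2 ≤ x → p ∈ D := by
    intro p hc hL
    refine (hmemD p).mpr ⟨?_, hc, hL⟩
    have := leftEnd_ge_fst (t := t) (a := p.1) (b := p.2) hc
    have : (p.1 : ℝ) ≤ (⌈x⌉₊ : ℝ) := by linarith
    exact_mod_cast this
  have hne : D.Nonempty := by
    refine ⟨(1, t), hmemD' (1, t) ⟨le_refl 1, by omega, le_refl t, Nat.gcd_one_left t⟩ ?_⟩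
    rw [leftEnd_one_t (by omega)]
    exact hxt
  obtain ⟨σ, hσD, hmax⟩ := D.exists_max_image slopeR hne
  obtain ⟨hσ1, hσc, hσL⟩ := (hmemD σ).mp hσD
  refine ⟨σ, hσc, hσL, ?_⟩
  obtain ⟨c, d, hcd, hlt, hLeq⟩ := exists_succ (t := t) (a := σ.1) (b := σ.2) hσc
  by_contra hcon
  push_neg at hcon
  have hLcd : leftEnd t c d ≤ x := by rw [hLeq]; linarith
  have hmemcd : (c, d) ∈ D := hmemD' (c, d) hcd hLcd
  have := hmax (c, d) hmemcd
  rw [slopeR_le_iff hcd.2.1 hσc.2.1] at this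
  simp only at this
  omega

lemma LS_swap_facts {t A : ℕ} {x : ℝ} {σ : ℕ × ℕ} (hσc : cond t σ)
    (hσL : leftEnd t σ.1 σ.2 ≤ x) (hA : x ≤ A) :
    ∀ q ∈ LS t σ.1 σ.2, (q.2, q.1) ∈ PF t A ∧
      leftEnd t q.2 q.1 + (edgeLen t q.1 : ℝ) ≤ leftEnd t σ.1 σ.2 := by
  intro q hq
  rw [mem_LS hσc.2.1] at hq
  obtain ⟨hq1, hq2, hq3, hq5, hq6⟩ := hq
  have hqc : cond t (q.2, q.1) := ⟨hq3, hq1, hq2, hq5⟩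
  have hLL := leftEnd_add_len_le hqc hσc hq6
  have hge := leftEnd_ge_fst hqc
  have hlen := edgeLen_nonneg t q.1
  have hq2A : q.2 ≤ A := by
    have : (q.2 : ℝ) ≤ (A : ℝ) := by linarith
    exact_mod_cast this
  exact ⟨mem_PF.mpr ⟨hq2A, hqc⟩, hLL⟩

lemma swap_not_mem_image {t : ℕ} {σ : ℕ × ℕ} : σ ∉ (LS t σ.1 σ.2).image Prod.swap := by
  intro h
  simp only [Finset.mem_image] at h
  obtain ⟨q, hq, hswap⟩ := h
  simp only [LS, Finset.mem_filter] at hq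
  have h1 : q.2 = σ.1 := by rw [← hswap]; rfl
  have h2 : q.1 = σ.2 := by rw [← hswap]; rfl
  have := hq.2.2
  rw [h1, h2] at this
  omega

lemma sum_clamp_ge {t A : ℕ} (ht : 2 ≤ t) {x : ℝ} (hxt : (t:ℝ) ≤ x) (hA : x ≤ A) :
    x - t ≤ ∑ p ∈ PF t A, clamp t x p := by
  obtain ⟨σ, hσc, hσL, hσR⟩ := exists_sigma ht hxt
  have hfacts := LS_swap_facts hσc hσL hA
  have hσPF : σ ∈ PF t A := by
    refine mem_PF.mpr ⟨?_, hσc⟩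
    have := leftEnd_ge_fst (t := t) (a := σ.1) (b := σ.2) hσc
    have : (σ.1 : ℝ) ≤ (A : ℝ) := by linarith
    exact_mod_cast this
  have hsub : insert σ ((LS t σ.1 σ.2).image Prod.swap) ⊆ PF t A := by
    refine Finset.insert_subset hσPF ?_
    intro p hp
    simp only [Finset.mem_image] at hp
    obtain ⟨q, hq, rfl⟩ := hp
    exact (hfacts q hq).1
  have hstep : ∑ p ∈ insert σ ((LS t σ.1 σ.2).image Prod.swap), clamp t x p
      ≤ ∑ p ∈ PF t A, clamp t x p :=
    Finset.sum_le_sum_of_subset_of_nonneg hsub (fun p _ _ => clamp_nonneg t x p)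
  rw [Finset.sum_insert swap_not_mem_image, Finset.sum_image
    (fun a _ b _ h => Prod.swap_injective h)] at hstep
  have himg : ∀ q ∈ LS t σ.1 σ.2, clamp t x (Prod.swap q) = (edgeLen t q.1 : ℝ) := by
    intro q hq
    have := (hfacts q hq).2
    exact clamp_eq_len (by simp only [Prod.swap]; linarith)
  rw [Finset.sum_congr rfl himg] at hstep
  have hmid : clamp t x σ = x - leftEnd t σ.1 σ.2 := clamp_eq_mid hσL hσR
  have hLE : leftEnd t σ.1 σ.2 = (t : ℝ) + ∑ q ∈ LS t σ.1 σ.2, (edgeLen t q.1 : ℝ) :=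
    leftEnd_eq t σ.1 σ.2
  rw [hmid] at hstep
  linarith

lemma term_ge {t : ℕ} {s x : ℝ} (hs : 0 ≤ s) (p : ℕ × ℕ) :
    s * clamp t x p ≤ slopeR p * clamp t x p + max (s - slopeR p) 0 * (edgeLen t p.2 : ℝ) := by
  have h0 := clamp_nonneg t x p
  have h1 := clamp_le_len t x p
  rcases le_or_gt s (slopeR p) with h | h
  · have : max (s - slopeR p) 0 = 0 := max_eq_right (by linarith)
    rw [this, zero_mul, add_zero]
    exact mul_le_mul_of_nonneg_right h h0
  · have : max (s - slopeR p) 0 = s - slopeR p := max_eq_left (by linarith)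
    rw [this]
    nlinarith

lemma gR_ge_line {t : ℕ} (ht : 2 ≤ t) {s x : ℝ} (hs : 0 ≤ s) :
    s * x - Fd t s ≤ gR t x := by
  set A : ℕ := ⌈x⌉₊ + ⌈s⌉₊ * t + t with hAdef
  have hA1 : x ≤ (A : ℝ) := by
    have h1 : x ≤ (⌈x⌉₊ : ℝ) := Nat.le_ceil x
    have h2 : (⌈x⌉₊ : ℝ) ≤ (A : ℝ) := by
      rw [hAdef]; push_cast
      have h3 : (0:ℝ) ≤ (⌈s⌉₊ : ℝ) * t + t := by positivity
      linarith
    linarith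
  have hA2 : s * t ≤ (A : ℝ) := by
    have h1 : s ≤ (⌈s⌉₊ : ℝ) := Nat.le_ceil s
    have h2 : s * t ≤ (⌈s⌉₊ : ℝ) * t := by
      apply mul_le_mul_of_nonneg_right h1 (by positivity)
    have h3 : ((⌈s⌉₊ * t : ℕ) : ℝ) ≤ (A : ℝ) := by
      rw [hAdef]; push_cast; push_cast at h2 ⊢; linarith [Nat.cast_nonneg (α := ℝ) ⌈x⌉₊, (by positivity : (0:ℝ) ≤ (t:ℝ))]
    push_cast at h3
    linarith
  rw [gR_eq_sum hA1, Fd_eq_sum (by omega) hA2]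
  have hsum : ∑ p ∈ PF t A, s * clamp t x p ≤
      ∑ p ∈ PF t A, (slopeR p * clamp t x p + max (s - slopeR p) 0 * (edgeLen t p.2 : ℝ)) :=
    Finset.sum_le_sum (fun p _ => term_ge hs p)
  rw [Finset.sum_add_distrib] at hsum
  rw [← Finset.mul_sum] at hsum
  have hcl : s * (x - t) ≤ s * ∑ p ∈ PF t A, clamp t x p := by
    rcases le_or_gt (t : ℝ) x with hxt | hxt
    · exact mul_le_mul_of_nonneg_left (sum_clamp_ge ht hxt hA1) hs
    · have h1 : (0:ℝ) ≤ ∑ p ∈ PF t A, clamp t x p :=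
        Finset.sum_nonneg (fun p _ => clamp_nonneg t x p)
      nlinarith
  nlinarith [hsum, hcl]

lemma filter_lt_eq {t A : ℕ} {x : ℝ} {σ : ℕ × ℕ} (hσc : cond t σ)
    (hσL : leftEnd t σ.1 σ.2 ≤ x) (hA : x ≤ A) :
    (PF t A).filter (fun p => p.1 * σ.2 < σ.1 * p.2) = (LS t σ.1 σ.2).image Prod.swap := by
  have hfacts := LS_swap_facts hσc hσL hA
  ext p
  simp only [Finset.mem_filter, Finset.mem_image, mem_PF]
  constructor
  · rintro ⟨⟨hpA, hpc⟩, hlt⟩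
    exact ⟨(p.2, p.1), (mem_LS hσc.2.1).mpr ⟨hpc.2.1, hpc.2.2.1, hpc.1, hpc.2.2.2, hlt⟩, rfl⟩
  · rintro ⟨q, hq, rfl⟩
    have h := hfacts q hq
    rw [mem_LS hσc.2.1] at hq
    exact ⟨mem_PF.mp h.1, hq.2.2.2.2⟩

lemma gR_eq_line {t : ℕ} (ht : 2 ≤ t) {x : ℝ} (hxt : (t:ℝ) ≤ x) :
    ∃ σ : ℕ × ℕ, cond t σ ∧
      gR t x = slopeR σ * x - Fd t (slopeR σ) := by
  obtain ⟨σ, hσc, hσL, hσR⟩ := exists_sigma ht hxt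
  set s := slopeR σ with hs
  set A : ℕ := ⌈x⌉₊ * t + ⌈x⌉₊ with hAdef
  have hxceil : x ≤ (⌈x⌉₊ : ℝ) := Nat.le_ceil x
  have hA1 : x ≤ (A : ℝ) := by
    have : (⌈x⌉₊ : ℝ) ≤ (A : ℝ) := by
      rw [hAdef]; push_cast
      have : (0:ℝ) ≤ (⌈x⌉₊ : ℝ) * t := by positivity
      linarith
    linarith
  have hσ1x : (σ.1 : ℝ) ≤ x := le_trans (leftEnd_ge_fst hσc) hσL
  have hσ1 : σ.1 ≤ ⌈x⌉₊ := by exact_mod_cast le_trans hσ1x hxceil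
  have hs0 : 0 ≤ s := slopeR_nonneg σ
  have hA2 : s * t ≤ (A : ℝ) := by
    have h1 : s ≤ (σ.1 : ℝ) := by
      rw [hs]; unfold slopeR
      exact div_le_self (by positivity) (by exact_mod_cast hσc.2.1)
    have h2 : s * t ≤ (σ.1 : ℝ) * t := mul_le_mul_of_nonneg_right h1 (by positivity)
    have h3 : (σ.1 : ℝ) * t ≤ (⌈x⌉₊ : ℝ) * t := by
      have : (σ.1 : ℝ) ≤ (⌈x⌉₊ : ℝ) := by exact_mod_cast hσ1
      exact mul_le_mul_of_nonneg_right this (by positivity)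
    have h4 : ((⌈x⌉₊ * t : ℕ) : ℝ) ≤ (A : ℝ) := by
      rw [hAdef]; push_cast
      have : (0:ℝ) ≤ (⌈x⌉₊ : ℝ) := by positivity
      linarith
    push_cast at h4
    linarith
  have hσPF : σ ∈ PF t A := mem_PF.mpr ⟨by omega, hσc⟩
  refine ⟨σ, hσc, ?_⟩
  rw [gR_eq_sum hA1, Fd_eq_sum (show 1 ≤ t by omega) hA2]
  have key : ∀ p ∈ PF t A,
      slopeR p * clamp t x p + max (s - slopeR p) 0 * (edgeLen t p.2 : ℝ)
      = if p.1 * σ.2 < σ.1 * p.2 then s * (edgeLen t p.2 : ℝ)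
        else if p = σ then s * (x - leftEnd t σ.1 σ.2) else 0 := by
    intro p hp
    obtain ⟨hpA, hpc⟩ := mem_PF.mp hp
    rcases Nat.lt_trichotomy (p.1 * σ.2) (σ.1 * p.2) with hlt | heq | hgt
    · rw [if_pos hlt]
      have hsl : slopeR p ≤ s := by
        rw [hs, slopeR_le_iff hpc.2.1 hσc.2.1]; exact hlt.le
      have hLL := leftEnd_add_len_le hpc hσc hlt
      have hclamp : clamp t x p = (edgeLen t p.2 : ℝ) := clamp_eq_len (by linarith)
      rw [hclamp, max_eq_left (by linarith)]
      ring
    · have hpσ : p = σ := by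
        have h2 := eq_of_cross_eq hpc hσc heq
        exact Prod.ext h2.1 h2.2
      subst hpσ
      rw [if_neg (by omega), if_pos rfl]
      have hclamp : clamp t x p = x - leftEnd t p.1 p.2 := clamp_eq_mid hσL hσR
      rw [hclamp]
      have : s - slopeR p = 0 := by rw [hs]; ring
      rw [this, max_self]
      ring
    · have hne : p ≠ σ := by
        intro hpe; subst hpe; omega
      rw [if_neg (by omega), if_neg hne]
      have hsl : s ≤ slopeR p := by
        rw [hs, slopeR_le_iff hσc.2.1 hpc.2.1]; exact hgt.le
      have hLL := leftEnd_add_len_le hσc hpc hgt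
      have hclamp : clamp t x p = 0 := clamp_eq_zero (by linarith)
      rw [hclamp, max_eq_right (by linarith), mul_zero, zero_mul, add_zero]
  have hsplit : ∑ p ∈ PF t A,
      (slopeR p * clamp t x p + max (s - slopeR p) 0 * (edgeLen t p.2 : ℝ))
      = s * (leftEnd t σ.1 σ.2 - t) + s * (x - leftEnd t σ.1 σ.2) := by
    rw [Finset.sum_congr rfl key, Finset.sum_ite]
    have hfirst : ∑ p ∈ (PF t A).filter (fun p => p.1 * σ.2 < σ.1 * p.2),
        s * (edgeLen t p.2 : ℝ) = s * (leftEnd t σ.1 σ.2 - t) := by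
      rw [filter_lt_eq hσc hσL hA1,
        Finset.sum_image (fun a _ b _ h => Prod.swap_injective h)]
      have : ∀ q ∈ LS t σ.1 σ.2, s * (edgeLen t (Prod.swap q).2 : ℝ)
          = s * (edgeLen t q.1 : ℝ) := fun q _ => rfl
      rw [Finset.sum_congr rfl this, ← Finset.mul_sum]
      have hLE := leftEnd_eq t σ.1 σ.2
      have : ∑ q ∈ LS t σ.1 σ.2, (edgeLen t q.1 : ℝ) = leftEnd t σ.1 σ.2 - t := by
        linarith
      rw [this]
    have hsecond : ∑ p ∈ (PF t A).filter (fun p => ¬ p.1 * σ.2 < σ.1 * p.2),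
        (if p = σ then s * (x - leftEnd t σ.1 σ.2) else 0)
        = s * (x - leftEnd t σ.1 σ.2) := by
      rw [Finset.sum_ite_eq' ]
      rw [if_pos (Finset.mem_filter.mpr ⟨hσPF, by omega⟩)]
    rw [hfirst, hsecond]
  have hdist : ∑ p ∈ PF t A,
      (slopeR p * clamp t x p + max (s - slopeR p) 0 * (edgeLen t p.2 : ℝ))
      = ∑ p ∈ PF t A, slopeR p * clamp t x p
        + ∑ p ∈ PF t A, max (s - slopeR p) 0 * (edgeLen t p.2 : ℝ) :=
    Finset.sum_add_distrib
  rw [hdist] at hsplit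
  linarith


lemma sum_moebius_divisors (n : ℕ) : (∑ d ∈ n.divisors, μ d) = if n = 1 then 1 else 0 := by
  have h := congrArg (fun f : ArithmeticFunction ℤ => f n) ArithmeticFunction.moebius_mul_coe_zeta
  rw [ArithmeticFunction.coe_mul_zeta_apply] at h
  rw [h, ArithmeticFunction.one_apply]

lemma divisors_gcd_eq {a b : ℕ} (ha : 1 ≤ a) (hb : 1 ≤ b) :
    (Nat.gcd a b).divisors = b.divisors.filter (fun d => d ∣ a) := by
  ext d
  simp only [Nat.mem_divisors, Finset.mem_filter]
  constructor
  · rintro ⟨hd, _⟩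
    exact ⟨⟨hd.trans (Nat.gcd_dvd_right a b), by omega⟩, hd.trans (Nat.gcd_dvd_left a b)⟩
  · rintro ⟨⟨hdb, _⟩, hda⟩
    refine ⟨Nat.dvd_gcd hda hdb, ?_⟩
    have := Nat.gcd_pos_of_pos_left b ha
    omega

/-- Möbius-filtered sum over an interval. -/
lemma moebius_filter_sum (b n : ℕ) (hb : 1 ≤ b) (f : ℕ → ℝ) :
    ∑ a ∈ (Icc 1 n).filter (fun a => Nat.gcd a b = 1), f a
    = ∑ d ∈ b.divisors, (μ d : ℝ) * ∑ a ∈ (Icc 1 n).filter (fun a => d ∣ a), f a := by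
  rw [Finset.sum_filter]
  have step : ∀ a ∈ Icc 1 n, (if Nat.gcd a b = 1 then f a else 0)
      = ∑ d ∈ b.divisors, (if d ∣ a then (μ d : ℝ) * f a else 0) := by
    intro a ha
    have ha1 : 1 ≤ a := (Finset.mem_Icc.mp ha).1
    have h1 : ∑ d ∈ b.divisors, (if d ∣ a then (μ d : ℝ) * f a else 0)
        = (∑ d ∈ b.divisors.filter (fun d => d ∣ a), (μ d : ℝ)) * f a := by
      rw [← Finset.sum_filter, Finset.sum_mul]
    rw [h1, ← divisors_gcd_eq ha1 hb]
    have h2 : (∑ d ∈ (Nat.gcd a b).divisors, (μ d : ℝ))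
        = ((∑ d ∈ (Nat.gcd a b).divisors, μ d : ℤ) : ℝ) := by push_cast; ring
    rw [h2, sum_moebius_divisors]
    by_cases hg : Nat.gcd a b = 1
    · rw [if_pos hg, if_pos hg]; norm_num
    · rw [if_neg hg, if_neg hg]; norm_num
  rw [Finset.sum_congr rfl step, Finset.sum_comm]
  apply Finset.sum_congr rfl
  intro d _
  rw [← Finset.sum_filter, Finset.mul_sum]

lemma filter_dvd_eq_image {d n : ℕ} (hd : 1 ≤ d) :
    (Icc 1 n).filter (fun a => d ∣ a) = (Icc 1 (n / d)).image (fun k => d * k) := by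
  ext a
  simp only [Finset.mem_filter, Finset.mem_Icc, Finset.mem_image]
  constructor
  · rintro ⟨⟨h1, h2⟩, k, rfl⟩
    refine ⟨k, ⟨Nat.one_le_iff_ne_zero.mpr (by rintro rfl; omega), ?_⟩, rfl⟩
    rw [Nat.le_div_iff_mul_le hd, Nat.mul_comm]
    exact h2
  · rintro ⟨k, ⟨h1, h2⟩, rfl⟩
    rw [Nat.le_div_iff_mul_le hd, Nat.mul_comm] at h2
    exact ⟨⟨Nat.one_le_iff_ne_zero.mpr (by positivity), h2⟩, ⟨k, rfl⟩⟩

lemma sum_dvd_linear {d n : ℕ} (hd : 1 ≤ d) (u v : ℝ) :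
    ∑ a ∈ (Icc 1 n).filter (fun a => d ∣ a), (u - v * a)
    = (n / d : ℕ) * u - v * d * ((n / d : ℕ) * ((n / d : ℕ) + 1) / 2 : ℝ) := by
  rw [filter_dvd_eq_image hd,
    Finset.sum_image (fun x _ y _ h => Nat.eq_of_mul_eq_mul_left (by omega) h)]
  have : ∀ k ∈ Icc 1 (n / d), (u - v * (d * k : ℕ)) = u - v * d * k := by
    intro k _; push_cast; ring
  rw [Finset.sum_congr rfl this]
  rw [Finset.sum_sub_distrib]
  rw [Finset.sum_const, Nat.card_Icc]
  have hgauss : ∑ k ∈ Icc 1 (n / d), (k : ℝ)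
      = ((n / d : ℕ) * ((n / d : ℕ) + 1) / 2 : ℝ) := by
    induction (n / d) with
    | zero => simp
    | succ m ih =>
      rw [Finset.sum_Icc_succ_top (by omega), ih]
      push_cast
      ring
  rw [← Finset.mul_sum, hgauss]
  push_cast
  ring

noncomputable def Gb (b : ℕ) (s : ℝ) : ℝ :=
  ∑ a ∈ (Icc 1 ⌊s * b⌋₊).filter (fun a => Nat.gcd a b = 1), (s * b - a)

lemma totient_card (b : ℕ) (hb : 1 ≤ b) :
    ((Icc 1 b).filter (fun a => Nat.gcd a b = 1)).card = Nat.totient b := by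
  rcases eq_or_lt_of_le hb with h1 | h2
  · rw [← h1]; decide
  · have : (Icc 1 b).filter (fun a => Nat.gcd a b = 1)
        = (range b).filter (fun a => Nat.Coprime b a) := by
      ext a
      simp only [Finset.mem_filter, Finset.mem_Icc, Finset.mem_range, Nat.Coprime]
      constructor
      · rintro ⟨⟨ha1, ha2⟩, hg⟩
        have : a ≠ b := by rintro rfl; rw [Nat.gcd_self] at hg; omega
        exact ⟨by omega, by rwa [Nat.gcd_comm]⟩
      · rintro ⟨ha, hg⟩
        have : a ≠ 0 := by rintro rfl; rw [Nat.gcd_zero_right] at hg; omega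
        exact ⟨⟨by omega, by omega⟩, by rwa [Nat.gcd_comm]⟩
    rw [this, Nat.totient_eq_card_coprime]

lemma totient_moebius (b : ℕ) (hb : 1 ≤ b) :
    (Nat.totient b : ℝ) = ∑ d ∈ b.divisors, (μ d : ℝ) * ((b / d : ℕ) : ℝ) := by
  have h := moebius_filter_sum b b hb (fun _ => (1:ℝ))
  have hL : ∑ a ∈ (Icc 1 b).filter (fun a => Nat.gcd a b = 1), (1:ℝ)
      = (Nat.totient b : ℝ) := by
    rw [Finset.sum_const, totient_card b hb]; simp
  rw [hL] at h
  rw [h]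
  apply Finset.sum_congr rfl
  intro d hd
  have hd1 : 1 ≤ d := Nat.pos_of_mem_divisors hd
  congr 1
  have h2 := sum_dvd_linear (n := b) hd1 (1:ℝ) 0
  have h3 : ∑ a ∈ (Icc 1 b).filter (fun a => d ∣ a), (1:ℝ)
      = ∑ a ∈ (Icc 1 b).filter (fun a => d ∣ a), ((1:ℝ) - 0 * a) := by
    apply Finset.sum_congr rfl; intros; ring
  rw [h3, h2]
  ring

lemma abs_moebius_real (d : ℕ) : |(μ d : ℝ)| ≤ 1 := by
  have h := ArithmeticFunction.abs_moebius_le_one (n := d)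
  calc |(μ d : ℝ)| = ((|μ d| : ℤ) : ℝ) := by push_cast; ring
  _ ≤ 1 := by exact_mod_cast h

lemma Gb_est {b : ℕ} (hb : 2 ≤ b) {s : ℝ} (hs : 0 ≤ s) :
    |Gb b s - s ^ 2 * b * (Nat.totient b : ℝ) / 2| ≤ ∑ d ∈ b.divisors, (d : ℝ) := by
  have hm0 : (0:ℝ) ≤ s * b := by positivity
  have hMm : ((⌊s * b⌋₊ : ℕ) : ℝ) ≤ s * b := Nat.floor_le hm0
  have hmM1 : s * b < (⌊s * b⌋₊ : ℕ) + 1 := Nat.lt_floor_add_one _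
  set M : ℕ := ⌊s * b⌋₊ with hMdef
  -- expand Gb by Möbius
  have h1 : Gb b s = ∑ d ∈ b.divisors, (μ d : ℝ) *
      ((M / d : ℕ) * (s * b) - 1 * d * ((M / d : ℕ) * ((M / d : ℕ) + 1) / 2)) := by
    rw [Gb, moebius_filter_sum b M (by omega) (fun a => s * b - a)]
    apply Finset.sum_congr rfl
    intro d hd
    have hd1 : 1 ≤ d := Nat.pos_of_mem_divisors hd
    congr 1
    have h3 : ∑ a ∈ (Icc 1 M).filter (fun a => d ∣ a), (s * b - (a:ℝ))
        = ∑ a ∈ (Icc 1 M).filter (fun a => d ∣ a), (s * b - 1 * (a:ℝ)) := by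
      apply Finset.sum_congr rfl; intros; ring
    rw [h3, sum_dvd_linear hd1 (s * b) 1]
  -- expand the main term by Möbius
  have h2 : s ^ 2 * b * (Nat.totient b : ℝ) / 2
      = ∑ d ∈ b.divisors, (μ d : ℝ) * ((s * b) ^ 2 / (2 * d)) := by
    rw [totient_moebius b (by omega), Finset.mul_sum, Finset.sum_div]
    apply Finset.sum_congr rfl
    intro d hd
    obtain ⟨hdvd, hb0⟩ := Nat.mem_divisors.mp hd
    have hd1 : 1 ≤ d := Nat.pos_of_mem_divisors hd
    have hcast : ((b / d : ℕ) : ℝ) = (b : ℝ) / d :=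
      Nat.cast_div hdvd (by positivity)
    rw [hcast]
    have hd0 : (d : ℝ) ≠ 0 := by positivity
    have hb0' : (b : ℝ) ≠ 0 := by positivity
    field_simp
  rw [h1, h2, ← Finset.sum_sub_distrib]
  have hmu0 : ∑ d ∈ b.divisors, (μ d : ℝ) = 0 := by
    have := sum_moebius_divisors b
    rw [if_neg (by omega)] at this
    have h4 : ∑ d ∈ b.divisors, (μ d : ℝ) = ((∑ d ∈ b.divisors, μ d : ℤ) : ℝ) := by
      push_cast; ring
    rw [h4, this]; norm_num
  -- rewrite each term
  have key : ∀ d ∈ b.divisors,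
      (μ d : ℝ) * ((M / d : ℕ) * (s * b) - 1 * d * ((M / d : ℕ) * ((M / d : ℕ) + 1) / 2))
        - (μ d : ℝ) * ((s * b) ^ 2 / (2 * d))
      = (μ d : ℝ) * ((s * b - d * (M / d : ℕ)) / 2
          - (s * b - d * (M / d : ℕ)) ^ 2 / (2 * d)) - (μ d : ℝ) * (s * b / 2) := by
    intro d hd
    have hd1 : 1 ≤ d := Nat.pos_of_mem_divisors hd
    have hd0 : (d : ℝ) ≠ 0 := by positivity
    field_simp
    ring
  rw [Finset.sum_congr rfl key, Finset.sum_sub_distrib]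
  have hlast : ∑ d ∈ b.divisors, (μ d : ℝ) * (s * b / 2) = 0 := by
    rw [← Finset.sum_mul, hmu0, zero_mul]
  rw [hlast, sub_zero]
  calc |∑ d ∈ b.divisors, (μ d : ℝ) * ((s * b - d * (M / d : ℕ)) / 2
          - (s * b - d * (M / d : ℕ)) ^ 2 / (2 * d))|
      ≤ ∑ d ∈ b.divisors, |(μ d : ℝ) * ((s * b - d * (M / d : ℕ)) / 2
          - (s * b - d * (M / d : ℕ)) ^ 2 / (2 * d))| := Finset.abs_sum_le_sum_abs _ _
    _ ≤ ∑ d ∈ b.divisors, (d : ℝ) := by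
        apply Finset.sum_le_sum
        intro d hd
        have hd1 : 1 ≤ d := Nat.pos_of_mem_divisors hd
        have hd0 : (0:ℝ) < d := by exact_mod_cast hd1
        set r : ℝ := s * b - d * (M / d : ℕ) with hr
        have hr0 : 0 ≤ r := by
          have h5 : (M / d) * d ≤ M := Nat.div_mul_le_self M d
          have h5' : ((M / d : ℕ) : ℝ) * d ≤ (M : ℝ) := by exact_mod_cast h5
          rw [hr]; nlinarith
        have hrd : r < d := by
          have h6 := Nat.div_add_mod M d
          have h7 : M % d < d := Nat.mod_lt _ (by omega)
          have h8 : (M : ℝ) = d * ((M / d : ℕ) : ℝ) + ((M % d : ℕ) : ℝ) := by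
            exact_mod_cast h6.symm
          have h9 : ((M % d : ℕ) : ℝ) ≤ (d : ℝ) - 1 := by
            have : (M % d) + 1 ≤ d := h7
            have := (Nat.cast_le (α := ℝ)).mpr this
            push_cast at this
            linarith
          rw [hr]
          nlinarith
        clear_value r
        rw [abs_mul]
        have hterm : |r / 2 - r ^ 2 / (2 * d)| ≤ (d : ℝ) := by
          rw [abs_le]
          have h11 : (0:ℝ) ≤ r ^ 2 / (2 * d) := by positivity
          have h12 : r ^ 2 / (2 * d) ≤ (d:ℝ) / 2 := by
            rw [div_le_div_iff₀ (by positivity) (by norm_num)]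
            nlinarith
          constructor
          · linarith
          · linarith
        calc |(μ d : ℝ)| * |r / 2 - r ^ 2 / (2 * d)| ≤ 1 * (d : ℝ) := by
              apply mul_le_mul (abs_moebius_real d) hterm (abs_nonneg _) (by norm_num)
          _ = (d : ℝ) := one_mul _


lemma sum_max_eq {b : ℕ} (hb : 1 ≤ b) {s : ℝ} (hs : 0 ≤ s) {A : ℕ}
    (hA : ⌊s * b⌋₊ ≤ A) :
    ∑ a ∈ (Icc 1 A).filter (fun a => Nat.gcd a b = 1), max (s * b - a) 0 = Gb b s := by
  rw [Gb]
  rw [← Finset.sum_subset (Finset.filter_subset_filter _ (Finset.Icc_subset_Icc_right hA))]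
  · apply Finset.sum_congr rfl
    intro a ha
    have ha' : a ≤ ⌊s * b⌋₊ := (Finset.mem_Icc.mp (Finset.mem_filter.mp ha).1).2
    have : (a : ℝ) ≤ s * b := by
      calc (a : ℝ) ≤ (⌊s * b⌋₊ : ℝ) := by exact_mod_cast ha'
      _ ≤ s * b := Nat.floor_le (by positivity)
    rw [max_eq_left (by linarith)]
  · intro a ha hna
    have ha1 : a ∈ Icc 1 A := (Finset.mem_filter.mp ha).1
    have hg : Nat.gcd a b = 1 := (Finset.mem_filter.mp ha).2
    have ha2 : ⌊s * b⌋₊ < a := by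
      by_contra hc
      push_neg at hc
      exact hna (Finset.mem_filter.mpr
        ⟨Finset.mem_Icc.mpr ⟨(Finset.mem_Icc.mp ha1).1, hc⟩, hg⟩)
    have : s * b < a := by
      calc s * b < (⌊s * b⌋₊ : ℝ) + 1 := Nat.lt_floor_add_one _
      _ ≤ (a : ℝ) := by exact_mod_cast ha2
    rw [max_eq_right (by linarith)]

lemma Fd_group {t : ℕ} (ht : 1 ≤ t) {s : ℝ} (hs : 0 ≤ s) :
    Fd t s = s * t + ∑ b ∈ Icc 1 t, ((t / b : ℕ) : ℝ) * Gb b s := by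
  have hA : s * t ≤ ((⌈s⌉₊ * t : ℕ) : ℝ) := by
    push_cast
    exact mul_le_mul_of_nonneg_right (Nat.le_ceil s) (by positivity)
  rw [Fd_eq_sum ht hA]
  congr 1
  rw [PF, Finset.sum_filter, Finset.sum_product_right]
  apply Finset.sum_congr rfl
  intro b hb
  obtain ⟨hb1, hb2⟩ := Finset.mem_Icc.mp hb
  have hb0 : (0:ℝ) < b := by exact_mod_cast hb1
  have hstep : ∀ a ∈ Icc 1 (⌈s⌉₊ * t),
      (if cond t (a, b) then max (s - slopeR (a, b)) 0 * (edgeLen t b : ℝ) else 0)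
      = (if Nat.gcd a b = 1 then ((t / b : ℕ) : ℝ) * max (s * b - a) 0 else 0) := by
    intro a ha
    have ha1 : 1 ≤ a := (Finset.mem_Icc.mp ha).1
    have hcond : cond t (a, b) ↔ Nat.gcd a b = 1 :=
      ⟨fun h => h.2.2.2, fun hg => ⟨ha1, hb1, hb2, hg⟩⟩
    rw [if_congr hcond rfl rfl]
    by_cases hg : Nat.gcd a b = 1
    · rw [if_pos hg, if_pos hg]
      have hlen : (edgeLen t b : ℝ) = (b : ℝ) * ((t / b : ℕ) : ℝ) := by
        rw [edgeLen]; push_cast; ring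
      have hmax : max (s - slopeR (a, b)) 0 * (b : ℝ) = max (s * b - a) 0 := by
        rw [max_mul_of_nonneg _ _ hb0.le]
        congr 1
        · unfold slopeR
          field_simp
        · exact zero_mul _
      calc max (s - slopeR (a, b)) 0 * (edgeLen t b : ℝ)
          = (max (s - slopeR (a, b)) 0 * (b : ℝ)) * ((t / b : ℕ) : ℝ) := by
            rw [hlen]; ring
        _ = ((t / b : ℕ) : ℝ) * max (s * b - a) 0 := by rw [hmax]; ring
    · rw [if_neg hg, if_neg hg]
  rw [Finset.sum_congr rfl hstep, ← Finset.sum_filter, ← Finset.mul_sum]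
  congr 1
  apply sum_max_eq hb1 hs
  have h1 : (⌊s * b⌋₊ : ℝ) ≤ ((⌈s⌉₊ * t : ℕ) : ℝ) := by
    have h2 : s * b ≤ s * t := mul_le_mul_of_nonneg_left (by exact_mod_cast hb2) hs
    have h3 : (⌊s * b⌋₊ : ℝ) ≤ s * b := Nat.floor_le (by positivity)
    linarith
  exact_mod_cast h1

lemma Hper_eq (t : ℕ) : (Hper t : ℝ)
    = ∑ b ∈ Icc 1 t, ((t / b : ℕ) : ℝ) * b * (Nat.totient b : ℝ) := by
  rw [Hper]
  push_cast
  rw [Finset.sum_filter, Finset.sum_product]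
  apply Finset.sum_congr rfl
  intro x hx
  obtain ⟨hx1, hx2⟩ := Finset.mem_Icc.mp hx
  have hset : (Icc 1 t).filter (fun y => y ≤ x ∧ Nat.gcd x y = 1)
      = (Icc 1 x).filter (fun y => Nat.gcd y x = 1) := by
    ext y
    simp only [Finset.mem_filter, Finset.mem_Icc]
    constructor
    · rintro ⟨⟨h1, _⟩, h3, h4⟩
      exact ⟨⟨h1, h3⟩, by rwa [Nat.gcd_comm]⟩
    · rintro ⟨⟨h1, h3⟩, h4⟩
      exact ⟨⟨h1, le_trans h3 hx2⟩, h3, by rwa [Nat.gcd_comm]⟩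
  calc ∑ y ∈ Icc 1 t, (if y ≤ x ∧ Nat.gcd x y = 1 then ((t / x : ℕ) : ℝ) * x else 0)
      = ∑ y ∈ (Icc 1 t).filter (fun y => y ≤ x ∧ Nat.gcd x y = 1), ((t / x : ℕ) : ℝ) * x := by
        rw [Finset.sum_filter]
    _ = ∑ y ∈ (Icc 1 x).filter (fun y => Nat.gcd y x = 1), ((t / x : ℕ) : ℝ) * x := by
        rw [hset]
    _ = (((Icc 1 x).filter (fun y => Nat.gcd y x = 1)).card : ℝ) * (((t / x : ℕ) : ℝ) * x) := by
        rw [Finset.sum_const, nsmul_eq_mul]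
    _ = ((t / x : ℕ) : ℝ) * x * (Nat.totient x : ℝ) := by
        rw [totient_card x hx1]; ring

lemma Gb_one_est {s : ℝ} (hs : 0 ≤ s) : |Gb 1 s - (s ^ 2 / 2 - s / 2)| ≤ 1 := by
  have hfil : (Icc 1 ⌊s * ((1:ℕ):ℝ)⌋₊).filter (fun a => Nat.gcd a 1 = 1)
      = (Icc 1 ⌊s * ((1:ℕ):ℝ)⌋₊).filter (fun a => (1:ℕ) ∣ a) := by
    apply Finset.filter_congr
    intro a _
    simp [Nat.gcd_one_right]
  have h1 : Gb 1 s = ∑ a ∈ (Icc 1 ⌊s * ((1:ℕ):ℝ)⌋₊).filter (fun a => (1:ℕ) ∣ a),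
      (s * ((1:ℕ):ℝ) - 1 * (a:ℝ)) := by
    rw [Gb, hfil]
    apply Finset.sum_congr rfl
    intros; ring
  rw [h1, sum_dvd_linear le_rfl (s * ((1:ℕ):ℝ)) 1]
  have hM : ⌊s * ((1:ℕ):ℝ)⌋₊ = ⌊s⌋₊ := by norm_num
  rw [hM]
  simp only [Nat.div_one, Nat.cast_one, mul_one]
  have hM1 : ((⌊s⌋₊ : ℕ) : ℝ) ≤ s := Nat.floor_le hs
  have hM2 : s < ((⌊s⌋₊ : ℕ) : ℝ) + 1 := Nat.lt_floor_add_one s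
  rw [abs_le]
  constructor <;> nlinarith [sq_nonneg (s - (⌊s⌋₊ : ℝ)), sq_nonneg (s - (⌊s⌋₊ : ℝ) - 1)]

lemma sigma_divisors_le {b t : ℕ} (hb1 : 1 ≤ b) (hbt : b ≤ t) (ht : 2 ≤ t) :
    ∑ d ∈ b.divisors, (d : ℝ) ≤ (b : ℝ) * (1 + Real.log t) := by
  have hb0 : b ≠ 0 := by omega
  have h1 : ∑ d ∈ b.divisors, (d : ℝ) = ∑ d ∈ b.divisors, ((b / d : ℕ) : ℝ) :=
    (Nat.sum_div_divisors b (fun d => (d : ℝ))).symm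
  have h2 : ∀ d ∈ b.divisors, ((b / d : ℕ) : ℝ) ≤ (b : ℝ) * (d : ℝ)⁻¹ := by
    intro d hd
    have := Nat.cast_div_le (α := ℝ) (m := b) (n := d)
    rw [div_eq_mul_inv] at this
    exact this
  have h3 : b.divisors ⊆ Icc 1 b := by
    intro d hd
    rw [Finset.mem_Icc]
    exact ⟨Nat.pos_of_mem_divisors hd, Nat.le_of_dvd (by omega) (Nat.mem_divisors.mp hd).1⟩
  have h1t : (1:ℝ) ≤ (b:ℝ) := by exact_mod_cast hb1
  calc ∑ d ∈ b.divisors, (d : ℝ) = ∑ d ∈ b.divisors, ((b / d : ℕ) : ℝ) := h1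
    _ ≤ ∑ d ∈ b.divisors, (b : ℝ) * (d : ℝ)⁻¹ := Finset.sum_le_sum h2
    _ ≤ ∑ d ∈ Icc 1 b, (b : ℝ) * (d : ℝ)⁻¹ := by
        apply Finset.sum_le_sum_of_subset_of_nonneg h3
        intro d hd _
        have : 1 ≤ d := (Finset.mem_Icc.mp hd).1
        positivity
    _ = (b : ℝ) * ∑ d ∈ Icc 1 b, (d : ℝ)⁻¹ := by rw [Finset.mul_sum]
    _ = (b : ℝ) * ((harmonic b : ℚ) : ℝ) := by
        congr 1
        rw [harmonic_eq_sum_Icc]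
        push_cast
        rfl
    _ ≤ (b : ℝ) * (1 + Real.log b) := by
        apply mul_le_mul_of_nonneg_left (harmonic_le_one_add_log b) (by positivity)
    _ ≤ (b : ℝ) * (1 + Real.log t) := by
        apply mul_le_mul_of_nonneg_left _ (by positivity)
        have : Real.log b ≤ Real.log t := by
          apply Real.log_le_log (by linarith)
          exact_mod_cast hbt
        linarith

lemma Fd_est {t : ℕ} (ht : 2 ≤ t) {s : ℝ} (hs : 0 ≤ s) :
    |Fd t s - (s * t / 2 + s ^ 2 * (Hper t : ℝ) / 2)|
      ≤ (t : ℝ) + (t : ℝ) ^ 2 * (1 + Real.log t) := by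
  rw [Fd_group (by omega) hs, Hper_eq]
  have h1t : (1:ℝ) ≤ (t:ℝ) := by exact_mod_cast (show (1:ℕ) ≤ t by omega)
  have hlog0 : 0 ≤ 1 + Real.log t := by
    have := Real.log_nonneg h1t
    linarith
  have hIcc : Icc 1 t = insert 1 (Icc 2 t) := by
    ext b; simp only [Finset.mem_Icc, Finset.mem_insert]; omega
  have hnotmem : (1:ℕ) ∉ Icc 2 t := by simp
  set X : ℝ := ∑ b ∈ Icc 2 t, ((t / b : ℕ) : ℝ)
      * (Gb b s - s ^ 2 * b * (Nat.totient b : ℝ) / 2) with hX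
  have hE : s * t + ∑ b ∈ Icc 1 t, ((t / b : ℕ) : ℝ) * Gb b s
      - (s * t / 2 + s ^ 2 * (∑ b ∈ Icc 1 t, ((t / b : ℕ) : ℝ) * b * (Nat.totient b : ℝ)) / 2)
      = (t : ℝ) * (Gb 1 s - (s ^ 2 / 2 - s / 2)) + X := by
    have hXsplit : X = (∑ b ∈ Icc 2 t, ((t / b : ℕ) : ℝ) * Gb b s)
        - s ^ 2 * (∑ b ∈ Icc 2 t, ((t / b : ℕ) : ℝ) * b * (Nat.totient b : ℝ)) / 2 := by
      rw [hX, Finset.mul_sum, Finset.sum_div, ← Finset.sum_sub_distrib]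
      apply Finset.sum_congr rfl
      intros; ring
    rw [hIcc, Finset.sum_insert hnotmem, Finset.sum_insert hnotmem, hXsplit]
    simp only [Nat.div_one, Nat.totient_one, Nat.cast_one]
    ring
  rw [hE]
  have hG1 := Gb_one_est hs
  have hXb : |X| ≤ (t : ℝ) ^ 2 * (1 + Real.log t) - (t:ℝ) * (1 + Real.log t) := by
    calc |X| ≤ ∑ b ∈ Icc 2 t, |((t / b : ℕ) : ℝ)
          * (Gb b s - s ^ 2 * b * (Nat.totient b : ℝ) / 2)| := Finset.abs_sum_le_sum_abs _ _
      _ ≤ ∑ b ∈ Icc 2 t, (t : ℝ) * (1 + Real.log t) := by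
          apply Finset.sum_le_sum
          intro b hb
          obtain ⟨hb2, hbt⟩ := Finset.mem_Icc.mp hb
          have hb0 : (0:ℝ) < b := by exact_mod_cast (show (0:ℕ) < b by omega)
          rw [abs_mul, Nat.abs_cast]
          have hGb := Gb_est hb2 hs
          have hsig := sigma_divisors_le (by omega) hbt ht
          have hdivle : ((t / b : ℕ) : ℝ) ≤ (t : ℝ) / b := Nat.cast_div_le
          calc ((t / b : ℕ) : ℝ) * |Gb b s - s ^ 2 * b * (Nat.totient b : ℝ) / 2|
              ≤ ((t : ℝ) / b) * ((b : ℝ) * (1 + Real.log t)) := by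
                apply mul_le_mul hdivle (le_trans hGb hsig) (abs_nonneg _) (by positivity)
            _ = (t : ℝ) * (1 + Real.log t) := by
                field_simp
      _ = ((t + 1 - 2 : ℕ) : ℝ) * ((t : ℝ) * (1 + Real.log t)) := by
          rw [Finset.sum_const, nsmul_eq_mul, Nat.card_Icc]
      _ ≤ (t : ℝ) ^ 2 * (1 + Real.log t) - (t:ℝ) * (1 + Real.log t) := by
          have hcast : ((t + 1 - 2 : ℕ) : ℝ) = (t : ℝ) - 1 := by
            rw [Nat.cast_sub (by omega)]
            push_cast
            ring
          rw [hcast]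
          nlinarith [sq_nonneg ((t:ℝ) - 1)]
  calc |(t : ℝ) * (Gb 1 s - (s ^ 2 / 2 - s / 2)) + X|
      ≤ |(t : ℝ) * (Gb 1 s - (s ^ 2 / 2 - s / 2))| + |X| := abs_add_le _ _
    _ = (t : ℝ) * |Gb 1 s - (s ^ 2 / 2 - s / 2)| + |X| := by rw [abs_mul, Nat.abs_cast]
    _ ≤ (t : ℝ) * 1 + ((t : ℝ) ^ 2 * (1 + Real.log t) - (t:ℝ) * (1 + Real.log t)) := by
        have := mul_le_mul_of_nonneg_left hG1 (by positivity : (0:ℝ) ≤ (t:ℝ))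
        linarith
    _ ≤ (t : ℝ) + (t : ℝ) ^ 2 * (1 + Real.log t) := by nlinarith

lemma Hper_ge {t : ℕ} (ht : 1 ≤ t) : (t : ℝ) ≤ (Hper t : ℝ) := by
  have h : t ≤ Hper t := by
    rw [Hper]
    have hmem : ((1,1) : ℕ × ℕ) ∈ (Finset.Icc 1 t ×ˢ Finset.Icc 1 t).filter
        (fun p => p.2 ≤ p.1 ∧ Nat.gcd p.1 p.2 = 1) := by
      rw [Finset.mem_filter, Finset.mem_product]
      refine ⟨⟨Finset.mem_Icc.mpr ⟨le_refl 1, ht⟩, Finset.mem_Icc.mpr ⟨le_refl 1, ht⟩⟩, ?_, ?_⟩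
      · exact le_refl 1
      · rfl
    have hs := Finset.single_le_sum (f := fun p : ℕ × ℕ => (t / p.1) * p.1)
      (fun p _ => Nat.zero_le _) hmem
    simpa using hs
  exact_mod_cast h

lemma gR_zero {t : ℕ} {x : ℝ} (hx : x ≤ (t:ℝ)) : gR t x = 0 := by
  rw [gR]
  have hall : ∀ p : ℕ × ℕ, (if 1 ≤ p.1 ∧ 1 ≤ p.2 ∧ p.2 ≤ t ∧ Nat.gcd p.1 p.2 = 1 then
      ((p.1:ℝ)/(p.2:ℝ)) * min (max (x - leftEnd t p.1 p.2) 0) ((edgeLen t p.2 : ℕ):ℝ)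
      else 0) = 0 := by
    intro p
    split_ifs with h
    · have h1 : x ≤ leftEnd t p.1 p.2 := le_trans hx leftEnd_ge_t
      have h2 := clamp_eq_zero (t := t) (x := x) (p := p) h1
      unfold clamp at h2
      rw [h2, mul_zero]
    · rfl
  rw [tsum_congr hall, tsum_zero]

lemma main_half {t : ℕ} (ht : 2 ≤ t) {x : ℝ} (hx : (t:ℝ)/2 ≤ x) :
    |gR t x - (x - (t:ℝ)/2)^2 / (2 * (Hper t : ℝ))|
      ≤ (t : ℝ) + (t:ℝ)^2 * (1 + Real.log t) := by
  have ht0 : (0:ℝ) < t := by exact_mod_cast (show 0 < t by omega)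
  have hH : (t:ℝ) ≤ (Hper t : ℝ) := Hper_ge (by omega)
  have hH0 : (0:ℝ) < (Hper t : ℝ) := by linarith
  have h1t : (1:ℝ) ≤ (t:ℝ) := by exact_mod_cast (show (1:ℕ) ≤ t by omega)
  have hlog0 : 0 ≤ Real.log t := Real.log_nonneg h1t
  have hE0 : (0:ℝ) ≤ (t : ℝ) + (t:ℝ)^2 * (1 + Real.log t) := by positivity
  rcases le_or_gt (t:ℝ) x with hxt | hxt
  · obtain ⟨σ, hσc, heq⟩ := gR_eq_line ht hxt
    have hs0 : 0 ≤ slopeR σ := slopeR_nonneg σ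
    have hFd := abs_le.mp (Fd_est ht hs0)
    have hup : gR t x - (x - (t:ℝ)/2)^2 / (2 * (Hper t : ℝ))
        ≤ (t : ℝ) + (t:ℝ)^2 * (1 + Real.log t) := by
      rw [heq]
      have key : slopeR σ * x - (slopeR σ * (t:ℝ)/2 + (slopeR σ)^2 * (Hper t : ℝ)/2)
          - (x - (t:ℝ)/2)^2/(2 * (Hper t : ℝ))
          = -(slopeR σ * (Hper t : ℝ) - (x - (t:ℝ)/2))^2/(2 * (Hper t : ℝ)) := by
        field_simp
        ring
      have hge : (0:ℝ) ≤ (slopeR σ * (Hper t : ℝ) - (x - (t:ℝ)/2))^2/(2 * (Hper t : ℝ)) := by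
        positivity
      have hle : slopeR σ * x - (slopeR σ * (t:ℝ)/2 + (slopeR σ)^2 * (Hper t : ℝ)/2)
          - (x - (t:ℝ)/2)^2/(2 * (Hper t : ℝ)) ≤ 0 := by
        rw [key, neg_div]
        linarith [hge]
      linarith [hFd.1, hle]
    have hs'0 : 0 ≤ (x - (t:ℝ)/2)/(Hper t : ℝ) := by
      apply div_nonneg (by linarith) (by linarith)
    have hlow := gR_ge_line (t := t) ht hs'0 (x := x)
    have hFd' := abs_le.mp (Fd_est ht hs'0)
    have hids : (x - (t:ℝ)/2)/(Hper t : ℝ) * x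
        - ((x - (t:ℝ)/2)/(Hper t : ℝ) * (t:ℝ)/2
          + ((x - (t:ℝ)/2)/(Hper t : ℝ))^2 * (Hper t : ℝ)/2)
        = (x - (t:ℝ)/2)^2/(2 * (Hper t : ℝ)) := by
      field_simp
      ring
    rw [abs_le]
    constructor
    · linarith [hlow, hFd'.2]
    · linarith [hup]
  · rw [gR_zero hxt.le]
    have h1 : 0 ≤ x - (t:ℝ)/2 := by linarith
    have h2 : x - (t:ℝ)/2 ≤ (t:ℝ)/2 := by linarith
    have h3 : (x - (t:ℝ)/2)^2 ≤ ((t:ℝ)/2)^2 := by nlinarith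
    have h4 : (x - (t:ℝ)/2)^2/(2 * (Hper t : ℝ)) ≤ (t:ℝ)/8 := by
      have h5 : (x - (t:ℝ)/2)^2/(2 * (Hper t : ℝ)) ≤ ((t:ℝ)/2)^2/(2 * (Hper t : ℝ)) :=
        (div_le_div_iff_of_pos_right (by linarith)).mpr h3
      have h6 : ((t:ℝ)/2)^2/(2 * (Hper t : ℝ)) ≤ ((t:ℝ)/2)^2/(2 * (t:ℝ)) := by
        apply div_le_div_of_nonneg_left (by positivity) (by linarith) (by linarith)
      have h7 : ((t:ℝ)/2)^2/(2 * (t:ℝ)) = (t:ℝ)/8 := by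
        field_simp
        ring
      linarith
    have h8 : (0:ℝ) ≤ (x - (t:ℝ)/2)^2/(2 * (Hper t : ℝ)) := by positivity
    rw [zero_sub, abs_neg, abs_of_nonneg h8]
    nlinarith

end GP

/-- The vertical distance between the grid parabola P_t and the reference
parabola y = (x - t/2)²/(2·H_t) is O(t² log t). -/
theorem gridParabola_near_reference :
    ∃ C : ℝ, 0 < C ∧ ∀ (t : ℕ) (x : ℝ), 2 ≤ t →
      |gridParabola t x - (x - (t : ℝ) / 2) ^ 2 / (2 * (Hper t : ℝ))|
        ≤ C * (t : ℝ) ^ 2 * Real.log t := by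
  refine ⟨10, by norm_num, ?_⟩
  intro t x ht
  have h2t : (2:ℝ) ≤ (t:ℝ) := by exact_mod_cast ht
  have hlogt : Real.log 2 ≤ Real.log t := Real.log_le_log (by norm_num) h2t
  have hL : (1:ℝ)/2 ≤ Real.log t := by
    have := Real.log_two_gt_d9
    linarith
  have hE : (t:ℝ) + (t:ℝ)^2 * (1 + Real.log t) ≤ 10 * (t:ℝ)^2 * Real.log t := by
    have k1 : (t:ℝ) ≤ (t:ℝ)^2 := by nlinarith
    have k2 : (t:ℝ)^2 ≤ 2 * (t:ℝ)^2 * Real.log t := by nlinarith [sq_nonneg (t:ℝ)]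
    nlinarith [sq_nonneg (t:ℝ)]
  have key : |gridParabola t x - (x - (t : ℝ) / 2) ^ 2 / (2 * (Hper t : ℝ))|
      ≤ (t:ℝ) + (t:ℝ)^2 * (1 + Real.log t) := by
    rw [gridParabola]
    split_ifs with h
    · have hy : (t:ℝ)/2 ≤ (t:ℝ) - x := by linarith
      have hmain := GP.main_half ht hy
      have hsq : ((t:ℝ) - x - (t:ℝ)/2)^2 = (x - (t:ℝ)/2)^2 := by ring
      rwa [hsq] at hmain
    · exact GP.main_half ht (by linarith)
  linarith
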